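/- Let U be a unicyclic graph with at least 3 vertices, let w ∈ V(U), and let G₁ be the graph obtained from U by adding k ≥ 2 new pendant vertices v₁, …, v_k each adjacent to w. Then the number of maximal dissociation sets of G₁ that do not contain w equals φ(U − w); that is, φ(G₁, w̄) = φ(U − w). -/

import Mathlib

open SimpleGraph

/-- A dissociation set: a set of vertices inducing a subgraph of maximum degree at most 1,
i.e., every vertex of `S` has at most one neighbour inside `S`. -/
def IsDissoc {V : Type*} (G : SimpleGraph V) (S : Set V) : Prop :=
  ∀ v ∈ S, {u | u ∈ S ∧ G.Adj v u}.Subsingleton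

/-- A maximal dissociation set: a dissociation set not properly contained in another one. -/
def IsMaxDissoc {V : Type*} (G : SimpleGraph V) (S : Set V) : Prop :=
  IsDissoc G S ∧ ∀ T : Set V, IsDissoc G T → S ⊆ T → S = T

/-- `phi G` is the number of maximal dissociation sets of `G`. -/
noncomputable def phi {V : Type*} (G : SimpleGraph V) : ℕ :=
  {S : Set V | IsMaxDissoc G S}.ncard

/-- The number of maximal dissociation sets of `G` not containing `u`. -/
noncomputable def phiNot {V : Type*} (G : SimpleGraph V) (u : V) : ℕ :=
  {S : Set V | IsMaxDissoc G S ∧ u ∉ S}.ncard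

/-- The number of maximal dissociation sets `S` of `G` with `u ∈ S` and
`u` of degree 0 in the subgraph induced by `S`. -/
noncomputable def phi0 {V : Type*} (G : SimpleGraph V) (u : V) : ℕ :=
  {S : Set V | IsMaxDissoc G S ∧ u ∈ S ∧ ∀ x ∈ S, ¬ G.Adj u x}.ncard

/-- The number of maximal dissociation sets `S` of `G` with `u ∈ S` and
`u` of degree 1 in the subgraph induced by `S`. -/
noncomputable def phi1 {V : Type*} (G : SimpleGraph V) (u : V) : ℕ :=
  {S : Set V | IsMaxDissoc G S ∧ u ∈ S ∧ ∃! x, x ∈ S ∧ G.Adj u x}.ncard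

/-- A unicyclic graph: a connected graph whose number of edges equals its number of vertices
(equivalently, a connected graph with exactly one cycle). -/
def IsUnicyclic {V : Type*} [Fintype V] (G : SimpleGraph V) : Prop :=
  G.Connected ∧ G.edgeSet.ncard = Fintype.card V

/-- The tree `T(p,q)` (for `q ≤ p`): obtained from the star `K_{1,p}` by subdividing
exactly `q` of its edges.  The centre is `Sum.inl ()`, the `p` neighbours of the centre are
`Sum.inr (Sum.inl i)`, and for `j < q` the vertex `Sum.inr (Sum.inr j)` is the subdivision
pendant attached to the `j`-th neighbour.  It has `1 + p + q` vertices. -/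
def treeT (p q : ℕ) (h : q ≤ p) : SimpleGraph (Unit ⊕ Fin p ⊕ Fin q) :=
  SimpleGraph.fromRel fun a b =>
    (∃ i : Fin p, a = Sum.inl () ∧ b = Sum.inr (Sum.inl i)) ∨
    (∃ j : Fin q, a = Sum.inr (Sum.inl (Fin.castLE h j)) ∧ b = Sum.inr (Sum.inr j))

/-- The unicyclic graph `U(p,q)` (for `q ≤ p`): obtained by identifying one vertex of the
triangle `K₃` with the centre of `T(p,q)`.  The centre is `Sum.inl ()`, the two other triangle
vertices are `Sum.inr (Sum.inl 0)` and `Sum.inr (Sum.inl 1)`, and the copy of `T(p,q)` sits on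
the remaining vertices.  It has `3 + p + q` vertices. -/
def graphU (p q : ℕ) (h : q ≤ p) : SimpleGraph (Unit ⊕ Fin 2 ⊕ Fin p ⊕ Fin q) :=
  SimpleGraph.fromRel fun a b =>
    (a = Sum.inl () ∧ b = Sum.inr (Sum.inl 0)) ∨
    (a = Sum.inl () ∧ b = Sum.inr (Sum.inl 1)) ∨
    (a = Sum.inr (Sum.inl 0) ∧ b = Sum.inr (Sum.inl 1)) ∨
    (∃ i : Fin p, a = Sum.inl () ∧ b = Sum.inr (Sum.inr (Sum.inl i))) ∨
    (∃ j : Fin q, a = Sum.inr (Sum.inr (Sum.inl (Fin.castLE h j))) ∧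
      b = Sum.inr (Sum.inr (Sum.inr j)))

/-- The unicyclic graph obtained from the cycle `C_r` by attaching one pendant vertex
`Sum.inr j` to the cycle vertex `Sum.inl (f j)` for each `j : Fin t`.  For injective `f`
this is a member of the class `𝒰_{r,t}`. -/
def graphUrtF (r t : ℕ) (f : Fin t → Fin r) : SimpleGraph (Fin r ⊕ Fin t) :=
  SimpleGraph.fromRel fun a b =>
    (∃ i j : Fin r, a = Sum.inl i ∧ b = Sum.inl j ∧ (cycleGraph r).Adj i j) ∨
    (∃ j : Fin t, a = Sum.inl (f j) ∧ b = Sum.inr j)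

/-- The canonical member `U_{r,t}` of `𝒰_{r,t}` (for `t ≤ r`): the cycle `C_r` with one
pendant vertex attached to each of its first `t` vertices. -/
def graphUrt (r t : ℕ) (h : t ≤ r) : SimpleGraph (Fin r ⊕ Fin t) :=
  graphUrtF r t (Fin.castLE h)

/-- A caterpillar: a tree in which deleting all vertices of degree 1 leaves a path. -/
def IsCaterpillar {V : Type*} [Fintype V] (G : SimpleGraph V) : Prop :=
  G.IsTree ∧ ∃ m : ℕ,
    Nonempty ((G.induce {v | 2 ≤ (G.neighborSet v).ncard}) ≃g SimpleGraph.pathGraph m)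

/-- The graph `G₁` obtained from `U` by adding `k` new pendant vertices
`v₁ = Sum.inr 0, …, v_k = Sum.inr (k-1)`, each adjacent to `w`. -/
def addPendants {V : Type*} (U : SimpleGraph V) (w : V) (k : ℕ) : SimpleGraph (V ⊕ Fin k) :=
  SimpleGraph.fromRel fun a b =>
    (∃ x y, a = Sum.inl x ∧ b = Sum.inl y ∧ U.Adj x y) ∨
    (∃ j : Fin k, a = Sum.inl w ∧ b = Sum.inr j)

/-- The graph `G₂ = G₁ - w v_k + v₁ v_k`: obtained from `U` by attaching the pendant vertices
`v₁, …, v_{k-1}` to `w` and the vertex `v_k` to `v₁`. -/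
def swapPendant {V : Type*} (U : SimpleGraph V) (w : V) (k : ℕ) : SimpleGraph (V ⊕ Fin k) :=
  SimpleGraph.fromRel fun a b =>
    (∃ x y, a = Sum.inl x ∧ b = Sum.inl y ∧ U.Adj x y) ∨
    (∃ j : Fin k, j.val < k - 1 ∧ a = Sum.inl w ∧ b = Sum.inr j) ∨
    (∃ j₀ j₁ : Fin k, j₀.val = 0 ∧ j₁.val = k - 1 ∧ a = Sum.inr j₀ ∧ b = Sum.inr j₁)

/-- The graph obtained from `H` by attaching a pendant path of length 2 at `w`:
two new vertices `v = Sum.inr 0` and `u = Sum.inr 1` with edges `w v` and `v u`. -/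
def addPath2 {V : Type*} (H : SimpleGraph V) (w : V) : SimpleGraph (V ⊕ Fin 2) :=
  SimpleGraph.fromRel fun a b =>
    (∃ x y, a = Sum.inl x ∧ b = Sum.inl y ∧ H.Adj x y) ∨
    (a = Sum.inl w ∧ b = Sum.inr 0) ∨
    (a = Sum.inr 0 ∧ b = Sum.inr 1)

lemma ap_inl_inl {V : Type*} (U : SimpleGraph V) (w : V) (k : ℕ) (x y : V) :
    (addPendants U w k).Adj (Sum.inl x) (Sum.inl y) ↔ U.Adj x y := by
  simp only [addPendants, fromRel_adj]
  constructor
  · rintro ⟨h, (⟨a,b,ha,hb,hab⟩|⟨j,_,hj⟩)|(⟨a,b,ha,hb,hab⟩|⟨j,_,hj⟩)⟩ <;>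
      first
      | (cases hj)
      | (cases ha; cases hb; first | exact hab | exact hab.symm)
  · intro h
    exact ⟨by simpa using h.ne, Or.inl (Or.inl ⟨x, y, rfl, rfl, h⟩)⟩

lemma ap_inr {V : Type*} (U : SimpleGraph V) (w : V) (k : ℕ) (j : Fin k) (b : V ⊕ Fin k) :
    (addPendants U w k).Adj (Sum.inr j) b ↔ b = Sum.inl w := by
  simp only [addPendants, fromRel_adj]
  constructor
  · rintro ⟨h, h'⟩
    rcases h' with (⟨a,c,ha,hb,hab⟩|⟨i,hi,hj⟩)|(⟨a,c,ha,hb,hab⟩|⟨i,hi,hj⟩) <;> simp_all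
  · rintro rfl
    exact ⟨by simp, Or.inr (Or.inr ⟨j, rfl, rfl⟩)⟩

lemma ap_inr' {V : Type*} (U : SimpleGraph V) (w : V) (k : ℕ) (j : Fin k) (b : V ⊕ Fin k) :
    (addPendants U w k).Adj b (Sum.inr j) ↔ b = Sum.inl w := by
  rw [adj_comm]; exact ap_inr U w k j b

/-- the lift map on vertex sets -/
def Fmap {V : Type*} (w : V) (k : ℕ) (T : Set {v : V // v ≠ w}) : Set (V ⊕ Fin k) :=
  Sum.inl '' (Subtype.val '' T) ∪ Set.range Sum.inr

lemma mem_Fmap_inl {V : Type*} {w : V} {k : ℕ} {T : Set {v : V // v ≠ w}}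
    {x : {v : V // v ≠ w}} : Sum.inl (x : V) ∈ Fmap w k T ↔ x ∈ T := by
  constructor
  · rintro (⟨y, ⟨t, ht, rfl⟩, h⟩ | ⟨j, hj⟩)
    · rwa [show t = x from Subtype.ext (Sum.inl.inj h)] at ht
    · cases hj
  · intro hx; exact Or.inl ⟨x, ⟨x, hx, rfl⟩, rfl⟩

lemma inl_w_not_mem_Fmap {V : Type*} {w : V} {k : ℕ} {T : Set {v : V // v ≠ w}} :
    Sum.inl w ∉ Fmap w k T := by
  rintro (⟨y, ⟨t, ht, rfl⟩, h⟩ | ⟨j, hj⟩)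
  · exact t.2 (Sum.inl.inj h)
  · cases hj

lemma inr_mem_Fmap {V : Type*} {w : V} {k : ℕ} {T : Set {v : V // v ≠ w}} (j : Fin k) :
    Sum.inr j ∈ Fmap w k T := Or.inr ⟨j, rfl⟩

lemma Fmap_mono {V : Type*} {w : V} {k : ℕ} {T T' : Set {v : V // v ≠ w}} (h : T ⊆ T') :
    Fmap w k T ⊆ Fmap w k T' :=
  Set.union_subset_union_left _ (Set.image_mono (Set.image_mono h))

lemma dissoc_Fmap {V : Type*} (U : SimpleGraph V) (w : V) (k : ℕ)
    {T : Set {v : V // v ≠ w}} (hT : IsDissoc (U.induce {v | v ≠ w}) T) :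
    IsDissoc (addPendants U w k) (Fmap w k T) := by
  intro v hv
  rcases hv with ⟨y, ⟨t, htT, rfl⟩, rfl⟩ | ⟨j, rfl⟩
  · -- v = Sum.inl ↑t
    have key : ∀ u, u ∈ Fmap w k T → (addPendants U w k).Adj (Sum.inl (t : V)) u →
        ∃ s ∈ T, u = Sum.inl (s : V) ∧ (U.induce {v | v ≠ w}).Adj t s := by
      rintro (x | j) hu hadj
      · rcases hu with ⟨y, ⟨s, hsT, rfl⟩, h⟩ | ⟨j, hj⟩
        · cases Sum.inl.inj h
          exact ⟨s, hsT, rfl, (ap_inl_inl U w k _ _).1 hadj⟩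
        · cases hj
      · exact absurd (Sum.inl.inj ((ap_inr' U w k j _).1 hadj)) t.2
    intro u₁ hu₁ u₂ hu₂
    obtain ⟨s₁, hs₁, rfl, ha₁⟩ := key u₁ hu₁.1 hu₁.2
    obtain ⟨s₂, hs₂, rfl, ha₂⟩ := key u₂ hu₂.1 hu₂.2
    have := hT t htT ⟨hs₁, ha₁⟩ ⟨hs₂, ha₂⟩
    rw [this]
  · intro u₁ hu₁ u₂ hu₂
    exfalso
    have h1 := (ap_inr U w k j u₁).1 hu₁.2
    exact inl_w_not_mem_Fmap (h1 ▸ hu₁.1)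

lemma dissoc_pull {V : Type*} (U : SimpleGraph V) (w : V) (k : ℕ)
    {S : Set (V ⊕ Fin k)} (hS : IsDissoc (addPendants U w k) S) :
    IsDissoc (U.induce {v | v ≠ w}) {x : {v : V // v ≠ w} | Sum.inl (x : V) ∈ S} := by
  intro t ht s₁ hs₁ s₂ hs₂
  have h1 : Sum.inl (s₁ : V) ∈ {u | u ∈ S ∧ (addPendants U w k).Adj (Sum.inl (t : V)) u} :=
    ⟨hs₁.1, (ap_inl_inl U w k _ _).2 hs₁.2⟩
  have h2 : Sum.inl (s₂ : V) ∈ {u | u ∈ S ∧ (addPendants U w k).Adj (Sum.inl (t : V)) u} :=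
    ⟨hs₂.1, (ap_inl_inl U w k _ _).2 hs₂.2⟩
  exact Subtype.ext (Sum.inl.inj (hS _ ht h1 h2))

lemma pendant_mem {V : Type*} (U : SimpleGraph V) (w : V) (k : ℕ)
    {S : Set (V ⊕ Fin k)} (hmax : IsMaxDissoc (addPendants U w k) S)
    (hw : Sum.inl w ∉ S) (j : Fin k) : Sum.inr j ∈ S := by
  by_contra hj
  have hdis : IsDissoc (addPendants U w k) (insert (Sum.inr j) S) := by
    intro v hv
    rcases hv with rfl | hvS
    · intro u₁ hu₁ u₂ hu₂
      exfalso
      have := (ap_inr U w k j u₁).1 hu₁.2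
      subst this
      rcases hu₁.1 with h | h
      · cases h
      · exact hw h
    · intro u₁ hu₁ u₂ hu₂
      have key : ∀ u, u ∈ insert (Sum.inr j) S → (addPendants U w k).Adj v u → u ∈ S := by
        intro u hu hadj
        rcases hu with rfl | hu
        · exfalso
          have := (ap_inr' U w k j v).1 hadj
          subst this
          exact hw hvS
        · exact hu
      exact hmax.1 v hvS ⟨key u₁ hu₁.1 hu₁.2, hu₁.2⟩ ⟨key u₂ hu₂.1 hu₂.2, hu₂.2⟩
  have := hmax.2 _ hdis (Set.subset_insert _ _)
  exact hj (this ▸ Set.mem_insert _ _)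

lemma no_w {V : Type*} (U : SimpleGraph V) (w : V) {k : ℕ} (hk : 2 ≤ k)
    {S : Set (V ⊕ Fin k)} (hS : IsDissoc (addPendants U w k) S)
    (hall : ∀ j : Fin k, Sum.inr j ∈ S) : Sum.inl w ∉ S := by
  intro hw
  set j0 : Fin k := ⟨0, by omega⟩
  set j1 : Fin k := ⟨1, by omega⟩
  have adj : ∀ j : Fin k, (addPendants U w k).Adj (Sum.inl w) (Sum.inr j) := fun j =>
    (ap_inr' U w k j _).2 rfl
  have h0 : Sum.inr j0 ∈ {u | u ∈ S ∧ (addPendants U w k).Adj (Sum.inl w) u} :=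
    ⟨hall j0, adj j0⟩
  have h1 : Sum.inr j1 ∈ {u | u ∈ S ∧ (addPendants U w k).Adj (Sum.inl w) u} :=
    ⟨hall j1, adj j1⟩
  have := hS _ hw h0 h1
  simp [j0, j1, Fin.ext_iff] at this

lemma Fmap_injective {V : Type*} (w : V) (k : ℕ) :
    Function.Injective (Fmap w k (V := V)) := by
  intro T T' h
  ext x
  constructor
  · intro hx
    exact mem_Fmap_inl.1 (h ▸ mem_Fmap_inl.2 hx)
  · intro hx
    exact mem_Fmap_inl.1 (h ▸ mem_Fmap_inl.2 hx)


/-- let `U` be a unicyclic graph with at least 3 vertices, `w ∈ V(U)`, and `G₁`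
obtained from `U` by adding `k ≥ 2` pendant vertices at `w`. Then the number of maximal
dissociation sets of `G₁` not containing `w` equals `φ(U - w)`. -/
theorem stmt17 {V : Type*} [Fintype V] (U : SimpleGraph V) (hU : IsUnicyclic U)
    (hV : 3 ≤ Fintype.card V) (w : V) (k : ℕ) (hk : 2 ≤ k) :
    phiNot (addPendants U w k) (Sum.inl w) = phi (U.induce {v | v ≠ w}) := by
  classical
  have hset : {S : Set (V ⊕ Fin k) | IsMaxDissoc (addPendants U w k) S ∧ Sum.inl w ∉ S} =
      Fmap w k '' {T | IsMaxDissoc (U.induce {v | v ≠ w}) T} := by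
    ext S
    constructor
    · rintro ⟨hmax, hw⟩
      set T : Set {v : V // v ≠ w} := {x | Sum.inl (x : V) ∈ S} with hTdef
      have hSF : S = Fmap w k T := by
        apply Set.Subset.antisymm
        · rintro (x | j) hv
          · have hx : x ≠ w := fun h => hw (h ▸ hv)
            exact mem_Fmap_inl.2 (show (⟨x, hx⟩ : {v : V // v ≠ w}) ∈ T from hv)
          · exact inr_mem_Fmap j
        · rintro v hv
          rcases hv with ⟨y, ⟨t, htT, rfl⟩, rfl⟩ | ⟨j, rfl⟩
          · exact htT
          · exact pendant_mem U w k hmax hw j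
      refine ⟨T, ⟨dissoc_pull U w k hmax.1, ?_⟩, hSF.symm⟩
      intro T' hT' hTT'
      have := hmax.2 (Fmap w k T') (dissoc_Fmap U w k hT')
        (hSF ▸ Fmap_mono hTT')
      apply Set.Subset.antisymm hTT'
      intro x hx
      have hm : Sum.inl (x : V) ∈ S := by
        rw [this]; exact mem_Fmap_inl.2 hx
      exact hm
    · rintro ⟨T, hTmax, rfl⟩
      refine ⟨⟨dissoc_Fmap U w k hTmax.1, ?_⟩, inl_w_not_mem_Fmap⟩
      intro S' hS' hsub
      have hw' : Sum.inl w ∉ S' :=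
        no_w U w hk hS' (fun j => hsub (inr_mem_Fmap j))
      set T' : Set {v : V // v ≠ w} := {x | Sum.inl (x : V) ∈ S'} with hT'def
      have hTT' : T = T' :=
        hTmax.2 T' (dissoc_pull U w k hS')
          (fun x hx => hsub (mem_Fmap_inl.2 hx))
      apply Set.Subset.antisymm hsub
      rintro (x | j) hv
      · have hx : x ≠ w := fun h => hw' (h ▸ hv)
        have : (⟨x, hx⟩ : {v : V // v ≠ w}) ∈ T' := hv
        exact mem_Fmap_inl.2 (hTT' ▸ this)
      · exact inr_mem_Fmap j
  rw [phiNot, phi, hset, Set.ncard_image_of_injective _ (Fmap_injective w k)]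
  rfl
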